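/- For all integers n ≥ k ≥ 1, the infimum over all positive vectors x = (x_1, …, x_n) of the sum Σ_{j=1}^n x_j / max(x_{j+1}, …, x_{j+k}) (indices modulo n) equals ⌊(n + k − 1)/k⌋, i.e., this value is the greatest lower bound of the set of all such sums. -/

import Mathlib

open Finset

lemma sd_mod_eq (n : ℕ) (hn : 0 < n) (x : ℕ → ℝ) (hxper : ∀ j, x (j + n) = x j) :
    ∀ j, x j = x (j % n) := by
  intro j
  induction j using Nat.strong_induction_on with
  | _ j ih =>
    rcases lt_or_ge j n with h | h
    · rw [Nat.mod_eq_of_lt h]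
    · have h1 : j = (j - n) + n := by omega
      rw [Nat.mod_eq_sub_mod h]
      conv_lhs => rw [h1]
      rw [hxper]
      exact ih (j - n) (by omega)

lemma sd_lower (n k : ℕ) (hk : 1 ≤ k) (hkn : k ≤ n) (hne : (Finset.range k).Nonempty)
    (x : ℕ → ℝ) (hxpos : ∀ j, 0 < x j) (hxper : ∀ j, x (j + n) = x j) :
    (((n + k - 1) / k : ℕ) : ℝ) ≤ ∑ j ∈ Finset.range n,
      x j / ((Finset.range k).sup' hne (fun i => x (j + i + 1))) := by
  have hn : 0 < n := lt_of_lt_of_le hk hkn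
  set m := (n + k - 1) / k with hm
  set M : ℕ → ℝ := fun j => (Finset.range k).sup' hne (fun i => x (j + i + 1)) with hMdef
  have hmod : ∀ j, x j = x (j % n) := sd_mod_eq n hn x hxper
  have hMpos : ∀ j, 0 < M j := by
    intro j
    have h0 : (0 : ℕ) ∈ Finset.range k := mem_range.mpr hk
    have := Finset.le_sup' (fun i => x (j + i + 1)) h0
    calc (0:ℝ) < x (j + 0 + 1) := hxpos _
      _ ≤ M j := this
  set g : ℕ → ℝ := fun j => x j / M j with hgdef
  have hgpos : ∀ j, 0 < g j := fun j => div_pos (hxpos j) (hMpos j)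
  have hMper : ∀ j, M (j + n) = M j := by
    intro j
    apply Finset.sup'_congr hne rfl
    intro i _
    have : j + n + i + 1 = (j + i + 1) + n := by omega
    rw [this, hxper]
  have hgper : ∀ j, g j = g (j % n) := by
    have hMmod : ∀ j, M j = M (j % n) := sd_mod_eq n hn M hMper
    intro j; simp only [hgdef]; rw [hmod j, hMmod j]
  -- choose argmax in each window
  have hch : ∀ j, ∃ i, i ∈ Finset.range k ∧ M j = x (j + i + 1) := by
    intro j
    obtain ⟨i, hi, hval⟩ := Finset.exists_mem_eq_sup' hne (fun i => x (j + i + 1))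
    exact ⟨i, hi, hval⟩
  choose idx hidxmem hidxval using hch
  set f : ℕ → ℕ := fun j => j + idx j + 1 with hfdef
  have hflt : ∀ j, j < f j := fun j => by simp [hfdef]
  have hfle : ∀ j, f j ≤ j + k := by
    intro j
    have := mem_range.mp (hidxmem j)
    simp [hfdef]; omega
  have hgf : ∀ j, g j = x j / x (f j) := by
    intro j; simp only [hgdef, hfdef]; rw [hidxval j]
  -- global max
  obtain ⟨j0, hj0mem, hj0max⟩ := Finset.exists_max_image (Finset.range n) x ⟨0, mem_range.mpr hn⟩
  have hmax : ∀ j, x j ≤ x j0 := by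
    intro j
    rw [hmod j]
    exact hj0max _ (mem_range.mpr (Nat.mod_lt _ hn))
  set seq : ℕ → ℕ := fun t => f^[t] j0 with hseqdef
  have hseq0 : seq 0 = j0 := rfl
  have hseqS : ∀ t, seq (t + 1) = f (seq t) := by
    intro t; simp [hseqdef, Function.iterate_succ_apply']
  have hseqmono : StrictMono seq := strictMono_nat_of_lt_succ (fun t => by rw [hseqS]; exact hflt _)
  have hseqlb : ∀ t, j0 + t ≤ seq t := by
    intro t
    induction t with
    | zero => simp [hseq0]
    | succ t ih => rw [hseqS]; have := hflt (seq t); omega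
  have hsequb : ∀ t, seq t ≤ j0 + t * k := by
    intro t
    induction t with
    | zero => simp [hseq0]
    | succ t ih =>
      rw [hseqS]
      have := hfle (seq t)
      have : seq (t) + k ≤ j0 + t * k + k := by omega
      have h2 : (t+1) * k = t * k + k := by ring
      omega
  have hex : ∃ t, j0 + n ≤ seq t := ⟨n, by have := hseqlb n; omega⟩
  set T := Nat.find hex with hT
  have hTspec : j0 + n ≤ seq T := Nat.find_spec hex
  have hTmin : ∀ t, t < T → seq t < j0 + n := by
    intro t ht
    have := Nat.find_min hex ht
    omega
  have hmT : m ≤ T := by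
    have h1 : j0 + n ≤ j0 + T * k := le_trans hTspec (hsequb T)
    have h2 : n ≤ T * k := by omega
    rw [hm, Nat.div_le_iff_le_mul_add_pred hk]
    have : k * T = T * k := mul_comm _ _
    omega
  -- injectivity of residues
  have hseqlb0 : ∀ t, j0 ≤ seq t := fun t => le_trans (by omega) (hseqlb t)
  have hinj : Set.InjOn (fun t => seq t % n) (Finset.range T) := by
    have key : ∀ s t, s ∈ Finset.range T → t ∈ Finset.range T → s < t →
        seq s % n = seq t % n → False := by
      intro s t hs ht hlt hst
      rw [mem_range] at hs ht
      have h1 : seq s < seq t := hseqmono hlt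
      have h2 : seq t < j0 + n := hTmin t ht
      have h3 : j0 ≤ seq s := hseqlb0 s
      have hdvd : n ∣ seq t - seq s := (Nat.modEq_iff_dvd' (le_of_lt h1)).mp hst
      have h4 : seq t - seq s < n := by omega
      have h5 : 0 < seq t - seq s := by omega
      have := Nat.le_of_dvd h5 hdvd
      omega
    intro s hs t ht hst
    simp only [Finset.coe_range, Set.mem_Iio] at hs ht
    simp only at hst
    rcases lt_trichotomy s t with h | h | h
    · exact absurd hst (fun c => key s t (mem_range.mpr hs) (mem_range.mpr ht) h c)
    · exact h
    · exact absurd hst.symm (fun c => key t s (mem_range.mpr ht) (mem_range.mpr hs) h c)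
  -- the path sum is at most the full sum
  have hpath_le : ∑ t ∈ Finset.range T, g (seq t) ≤ ∑ j ∈ Finset.range n, g j := by
    have h1 : ∑ r ∈ (Finset.range T).image (fun t => seq t % n), g r
        = ∑ t ∈ Finset.range T, g (seq t) := by
      rw [Finset.sum_image (fun a ha b hb hab => hinj (by simpa using ha) (by simpa using hb) hab)]
      exact Finset.sum_congr rfl (fun t _ => (hgper (seq t)).symm)
    rw [← h1]
    apply Finset.sum_le_sum_of_subset_of_nonneg
    · intro r hr
      simp only [Finset.mem_image] at hr
      obtain ⟨t, _, rfl⟩ := hr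
      exact mem_range.mpr (Nat.mod_lt _ hn)
    · exact fun j _ _ => le_of_lt (hgpos j)
  -- lower bound on the path sum via logarithms
  set L : ℕ → ℝ := fun t => Real.log (x (seq t)) with hLdef
  have hlog : ∀ t, (1:ℝ) + (L t - L (t+1)) ≤ g (seq t) := by
    intro t
    have hgq : g (seq t) = x (seq t) / x (seq (t+1)) := by rw [hgf, hseqS]
    have hq : 0 < x (seq t) / x (seq (t+1)) := div_pos (hxpos _) (hxpos _)
    have h2 := Real.log_le_sub_one_of_pos hq
    rw [Real.log_div (ne_of_gt (hxpos _)) (ne_of_gt (hxpos _))] at h2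
    rw [hgq]
    simp only [hLdef]
    linarith
  have hpath_ge : (T : ℝ) ≤ ∑ t ∈ Finset.range T, g (seq t) := by
    have h1 : ∑ t ∈ Finset.range T, ((1:ℝ) + (L t - L (t+1)))
        ≤ ∑ t ∈ Finset.range T, g (seq t) :=
      Finset.sum_le_sum (fun t _ => hlog t)
    have h2 : ∑ t ∈ Finset.range T, ((1:ℝ) + (L t - L (t+1)))
        = T + (L 0 - L T) := by
      rw [Finset.sum_add_distrib, Finset.sum_range_sub' L T, Finset.sum_const, Finset.card_range]
      simp
    have h3 : L T ≤ L 0 := by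
      apply Real.log_le_log (hxpos _)
      rw [hseq0]
      exact hmax _
    rw [h2] at h1
    linarith
  have hgoal : ∑ j ∈ Finset.range n, g j
      = ∑ j ∈ Finset.range n, x j / ((Finset.range k).sup' hne (fun i => x (j + i + 1))) :=
    Finset.sum_congr rfl (fun j _ => rfl)
  rw [← hgoal]
  have hmTr : (m : ℝ) ≤ (T : ℝ) := Nat.cast_le.mpr hmT
  linarith

lemma sd_card (n k : ℕ) (hk : 1 ≤ k) (hn : 1 ≤ n) :
    ((Finset.range n).filter (fun j => j % k = 0)).card = (n + k - 1) / k := by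
  have hmval : (n + k - 1) / k = (n - 1) / k + 1 := by
    have h : n + k - 1 = (n - 1) + k := by omega
    rw [h, Nat.add_div_right _ hk]
  rw [hmval]
  have himg : (Finset.range n).filter (fun j => j % k = 0)
      = (Finset.range ((n-1)/k + 1)).image (fun t => t * k) := by
    ext j
    simp only [Finset.mem_filter, Finset.mem_range, Finset.mem_image]
    constructor
    · rintro ⟨hj, hjk⟩
      refine ⟨j / k, ?_, Nat.div_mul_cancel (Nat.dvd_of_mod_eq_zero hjk)⟩
      have : j / k ≤ (n-1)/k := Nat.div_le_div_right (by omega)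
      omega
    · rintro ⟨t, ht, rfl⟩
      refine ⟨?_, Nat.mul_mod_left t k⟩
      have h1 : t ≤ (n-1)/k := by omega
      have h2 : t * k ≤ ((n-1)/k) * k := Nat.mul_le_mul_right _ h1
      have h3 : ((n-1)/k) * k ≤ n - 1 := Nat.div_mul_le_self _ _
      omega
  rw [himg, Finset.card_image_of_injective _
      (fun a b hab => Nat.eq_of_mul_eq_mul_right hk hab), Finset.card_range]

lemma sd_upper (n k : ℕ) (hk : 1 ≤ k) (hkn : k ≤ n) (hne : (Finset.range k).Nonempty)
    (ε : ℝ) (hε : 0 < ε) :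
    ∃ x : ℕ → ℝ, (∀ j, 0 < x j) ∧ (∀ j, x (j + n) = x j) ∧
      ∑ j ∈ Finset.range n, x j / ((Finset.range k).sup' hne (fun i => x (j + i + 1)))
        ≤ (((n + k - 1) / k : ℕ) : ℝ) + ε := by
  have hn : 1 ≤ n := le_trans hk hkn
  set δ : ℝ := min (ε / n) 1 with hδdef
  have hδpos : 0 < δ := lt_min (div_pos hε (by positivity)) one_pos
  have hδ1 : δ ≤ 1 := min_le_right _ _
  have hnδ : (n : ℝ) * δ ≤ ε := by
    have h1 : (n:ℝ) * δ ≤ n * (ε / n) :=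
      mul_le_mul_of_nonneg_left (min_le_left _ _) (by positivity)
    have h2 : (n:ℝ) * (ε / n) = ε := by
      field_simp
    linarith
  set x : ℕ → ℝ := fun j => δ ^ ((j % n) % k) with hxdef
  have hxpos : ∀ j, 0 < x j := fun j => pow_pos hδpos _
  have hxper : ∀ j, x (j + n) = x j := by
    intro j
    simp only [hxdef, Nat.add_mod_right]
  refine ⟨x, hxpos, hxper, ?_⟩
  have hxle1 : ∀ j, x j ≤ 1 := fun j => pow_le_one₀ (le_of_lt hδpos) hδ1
  have hM : ∀ j, j < n → (Finset.range k).sup' hne (fun i => x (j + i + 1)) = 1 := by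
    intro j hj
    apply le_antisymm
    · exact Finset.sup'_le _ _ (fun i _ => hxle1 _)
    · -- find a witness i with x (j + i + 1) = 1
      have : ∃ i, i ∈ Finset.range k ∧ x (j + i + 1) = 1 := by
        rcases lt_or_ge n (j + 1 + k) with hcase | hcase
        · -- the window wraps: use index n
          refine ⟨n - (j + 1), mem_range.mpr (by omega), ?_⟩
          have h1 : j + (n - (j + 1)) + 1 = n := by omega
          rw [h1]
          simp [hxdef, Nat.mod_self]
        · -- window stays in [1, n): use next multiple of k
          set i := (k - (j + 1) % k) % k with hidef
          have hik : i < k := Nat.mod_lt _ hk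
          refine ⟨i, mem_range.mpr hik, ?_⟩
          have hlt : j + i + 1 < n := by omega
          have hmodk : (j + i + 1) % k = 0 := by
            have hak : (j + 1) % k < k := Nat.mod_lt _ hk
            rcases Nat.eq_zero_or_pos ((j + 1) % k) with h0 | h0
            · have hi0 : i = 0 := by
                rw [hidef, h0, Nat.sub_zero, Nat.mod_self]
              have : j + i + 1 = j + 1 := by omega
              rw [this]; exact h0
            · have hi' : i = k - (j + 1) % k := by
                rw [hidef]; exact Nat.mod_eq_of_lt (by omega)
              have h1 : j + i + 1 = (j + 1) + i := by omega
              rw [h1, Nat.add_mod, hi', Nat.mod_eq_of_lt (show k - (j+1) % k < k by omega)]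
              have h2 : (j + 1) % k + (k - (j + 1) % k) = k := by omega
              rw [h2, Nat.mod_self]
          simp only [hxdef]
          rw [Nat.mod_eq_of_lt hlt, hmodk, pow_zero]
      obtain ⟨i, hi, hval⟩ := this
      calc (1:ℝ) = x (j + i + 1) := hval.symm
        _ ≤ _ := Finset.le_sup' (fun i => x (j + i + 1)) hi
  calc ∑ j ∈ Finset.range n, x j / ((Finset.range k).sup' hne (fun i => x (j + i + 1)))
      = ∑ j ∈ Finset.range n, x j := by
        apply Finset.sum_congr rfl
        intro j hj
        rw [hM j (mem_range.mp hj), div_one]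
    _ ≤ ∑ j ∈ Finset.range n, ((if j % k = 0 then (1:ℝ) else 0) + δ) := by
        apply Finset.sum_le_sum
        intro j hj
        have hjn : j % n = j := Nat.mod_eq_of_lt (mem_range.mp hj)
        simp only [hxdef, hjn]
        by_cases h : j % k = 0
        · rw [h]; simp only [pow_zero, if_true, eq_self_iff_true]
          norm_num; linarith
        · rw [if_neg h]
          have : δ ^ (j % k) ≤ δ := pow_le_of_le_one (le_of_lt hδpos) hδ1 h
          linarith
    _ = (((n + k - 1) / k : ℕ) : ℝ) + (n : ℝ) * δ := by
        rw [Finset.sum_add_distrib, Finset.sum_boole, sd_card n k hk hn,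
          Finset.sum_const, Finset.card_range, nsmul_eq_mul]
    _ ≤ (((n + k - 1) / k : ℕ) : ℝ) + ε := by linarith

theorem shapiro_diananda_max_infimum (n k : ℕ) (hk : 1 ≤ k) (hkn : k ≤ n) :
    IsGLB
      { S : ℝ | ∃ x : ℕ → ℝ, (∀ j, 0 < x j) ∧ (∀ j, x (j + n) = x j) ∧
          S = ∑ j ∈ Finset.range n,
                x j / ((Finset.range k).sup' (Finset.nonempty_range_iff.mpr (by omega))
                  (fun i => x (j + i + 1))) }
      (((n + k - 1) / k : ℕ) : ℝ) := by
  constructor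
  · rintro S ⟨x, hxpos, hxper, rfl⟩
    exact sd_lower n k hk hkn _ x hxpos hxper
  · intro b hb
    apply le_of_forall_pos_le_add
    intro ε hε
    obtain ⟨x, hxpos, hxper, hxsum⟩ :=
      sd_upper n k hk hkn (Finset.nonempty_range_iff.mpr (by omega)) ε hε
    exact le_trans (hb ⟨x, hxpos, hxper, rfl⟩) hxsum
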